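/- arXiv:0910.1722 — 3 statements merged into one kernel-verified Lean document; each statement's English description precedes it below -/
import Mathlib

section
/- There is no regular icosahedron all of whose 12 vertices have integer coordinates in ℝ³. -/
/-- The golden ratio. -/
noncomputable def goldenR : ℝ := (1 + Real.sqrt 5) / 2

/-- The vertices of the standard regular icosahedron: all cyclic permutations of
`(0, ±1, ±φ)` where `φ` is the golden ratio. -/
noncomputable def stdIcosahedron : Set (EuclideanSpace ℝ (Fin 3)) :=
  {v | ∃ s t : ℝ, (s = 1 ∨ s = -1) ∧ (t = 1 ∨ t = -1) ∧
    (v = (WithLp.equiv 2 (Fin 3 → ℝ)).symm ![0, s, t * goldenR] ∨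
     v = (WithLp.equiv 2 (Fin 3 → ℝ)).symm ![s, t * goldenR, 0] ∨
     v = (WithLp.equiv 2 (Fin 3 → ℝ)).symm ![t * goldenR, 0, s])}

/-- A set `S ⊆ ℝ³` is (the vertex set of) a regular icosahedron if it is the image of the
standard icosahedron's vertex set under a similarity transformation of `ℝ³`. -/
def IsRegularIcosahedron (S : Set (EuclideanSpace ℝ (Fin 3))) : Prop :=
  ∃ (r : ℝ) (f : EuclideanSpace ℝ (Fin 3) → EuclideanSpace ℝ (Fin 3)), 0 < r ∧
    (∀ p ∈ stdIcosahedron, ∀ q ∈ stdIcosahedron, dist (f p) (f q) = r * dist p q) ∧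
    S = f '' stdIcosahedron

lemma goldenR_pos : 0 < goldenR := by
  unfold goldenR
  positivity

lemma goldenR_sq : goldenR ^ 2 = (3 + Real.sqrt 5) / 2 := by
  have h5 : Real.sqrt 5 ^ 2 = 5 := Real.sq_sqrt (by norm_num)
  unfold goldenR
  nlinarith [h5]

lemma int_dist_sq (v w : EuclideanSpace ℝ (Fin 3))
    (hv : ∀ i, ∃ z : ℤ, v i = z) (hw : ∀ i, ∃ z : ℤ, w i = z) :
    ∃ z : ℤ, dist v w ^ 2 = z := by
  choose zv hzv using hv
  choose zw hzw using hw
  refine ⟨∑ i, (zv i - zw i) ^ 2, ?_⟩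
  rw [EuclideanSpace.dist_eq, Real.sq_sqrt (by positivity)]
  push_cast
  refine Finset.sum_congr rfl fun i _ => ?_
  rw [Real.dist_eq, sq_abs, hzv, hzw]

/-- There is no regular icosahedron all of whose vertices have integer coordinates. -/
theorem no_integer_regular_icosahedron :
    ¬ ∃ S : Set (EuclideanSpace ℝ (Fin 3)),
      IsRegularIcosahedron S ∧ ∀ v ∈ S, ∀ i : Fin 3, ∃ z : ℤ, v i = z := by
  rintro ⟨S, ⟨r, f, hr, hiso, rfl⟩, hint⟩
  set p : EuclideanSpace ℝ (Fin 3) := (WithLp.equiv 2 (Fin 3 → ℝ)).symm ![0, 1, 1 * goldenR] with hpdef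
  set q : EuclideanSpace ℝ (Fin 3) := (WithLp.equiv 2 (Fin 3 → ℝ)).symm ![0, -1, 1 * goldenR] with hqdef
  set u : EuclideanSpace ℝ (Fin 3) := (WithLp.equiv 2 (Fin 3 → ℝ)).symm ![0, 1, -1 * goldenR] with hudef
  have hp : p ∈ stdIcosahedron := ⟨1, 1, Or.inl rfl, Or.inl rfl, Or.inl rfl⟩
  have hq : q ∈ stdIcosahedron := ⟨-1, 1, Or.inr rfl, Or.inl rfl, Or.inl rfl⟩
  have hu : u ∈ stdIcosahedron := ⟨1, -1, Or.inl rfl, Or.inr rfl, Or.inl rfl⟩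
  have hg := goldenR_pos
  have hdpq : dist p q ^ 2 = 4 := by
    rw [EuclideanSpace.dist_eq, Real.sq_sqrt (by positivity)]
    simp [hpdef, hqdef, Fin.sum_univ_three, Real.dist_eq]
    norm_num
  have hdpu : dist p u ^ 2 = 4 * goldenR ^ 2 := by
    rw [EuclideanSpace.dist_eq, Real.sq_sqrt (by positivity)]
    simp [hpdef, hudef, Fin.sum_univ_three, Real.dist_eq]
    ring
  obtain ⟨za, hza⟩ := int_dist_sq (f p) (f q)
    (hint (f p) ⟨p, hp, rfl⟩) (hint (f q) ⟨q, hq, rfl⟩)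
  obtain ⟨zb, hzb⟩ := int_dist_sq (f p) (f u)
    (hint (f p) ⟨p, hp, rfl⟩) (hint (f u) ⟨u, hu, rfl⟩)
  have ha : (za : ℝ) = r ^ 2 * 4 := by
    rw [← hza, hiso p hp q hq, mul_pow, hdpq]
  have hb : (zb : ℝ) = r ^ 2 * (4 * goldenR ^ 2) := by
    rw [← hzb, hiso p hp u hu, mul_pow, hdpu]
  have hapos : (0:ℝ) < za := by rw [ha]; positivity
  have hane : za ≠ 0 := by exact_mod_cast hapos.ne'
  have key : (za : ℝ) * goldenR ^ 2 = zb := by rw [ha, hb]; ring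
  rw [goldenR_sq] at key
  have h5 : Irrational (Real.sqrt 5) := by simpa using (Nat.Prime.irrational_sqrt (by norm_num : Nat.Prime 5))
  apply h5
  refine ⟨(2 * zb - 3 * za) / za, ?_⟩
  push_cast
  field_simp
  nlinarith [key]
end

section
/- There is no regular dodecahedron all of whose 20 vertices have integer coordinates in ℝ³. -/
/-- The vertices of the standard regular dodecahedron: the points `(±1, ±1, ±1)` together
with all cyclic permutations of `(0, ±1/φ, ±φ)`, `φ` the golden ratio. -/
noncomputable def stdDodecahedron : Set (EuclideanSpace ℝ (Fin 3)) :=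
  {v | ∃ s t u : ℝ, (s = 1 ∨ s = -1) ∧ (t = 1 ∨ t = -1) ∧ (u = 1 ∨ u = -1) ∧
    (v = (WithLp.equiv 2 (Fin 3 → ℝ)).symm ![s, t, u] ∨
     v = (WithLp.equiv 2 (Fin 3 → ℝ)).symm ![0, s / goldenR, t * goldenR] ∨
     v = (WithLp.equiv 2 (Fin 3 → ℝ)).symm ![s / goldenR, t * goldenR, 0] ∨
     v = (WithLp.equiv 2 (Fin 3 → ℝ)).symm ![t * goldenR, 0, s / goldenR])}

/-- A set `S ⊆ ℝ³` is (the vertex set of) a regular dodecahedron if it is the image of the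
standard dodecahedron's vertex set under a similarity transformation of `ℝ³`. -/
def IsRegularDodecahedron (S : Set (EuclideanSpace ℝ (Fin 3))) : Prop :=
  ∃ (r : ℝ) (f : EuclideanSpace ℝ (Fin 3) → EuclideanSpace ℝ (Fin 3)), 0 < r ∧
    (∀ p ∈ stdDodecahedron, ∀ q ∈ stdDodecahedron, dist (f p) (f q) = r * dist p q) ∧
    S = f '' stdDodecahedron

lemma dist_sq_eq3 (x y : EuclideanSpace ℝ (Fin 3)) :
    dist x y ^ 2 = (x 0 - y 0) ^ 2 + (x 1 - y 1) ^ 2 + (x 2 - y 2) ^ 2 := by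
  rw [EuclideanSpace.dist_eq, Real.sq_sqrt (by positivity)]
  simp [Fin.sum_univ_three, Real.dist_eq, sq_abs]

lemma int_dist_sq_s1 (x y : EuclideanSpace ℝ (Fin 3))
    (hx : ∀ i : Fin 3, ∃ z : ℤ, x i = z) (hy : ∀ i : Fin 3, ∃ z : ℤ, y i = z) :
    ∃ k : ℤ, dist x y ^ 2 = (k : ℝ) := by
  obtain ⟨a0, ha0⟩ := hx 0; obtain ⟨a1, ha1⟩ := hx 1; obtain ⟨a2, ha2⟩ := hx 2
  obtain ⟨b0, hb0⟩ := hy 0; obtain ⟨b1, hb1⟩ := hy 1; obtain ⟨b2, hb2⟩ := hy 2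
  refine ⟨(a0 - b0) ^ 2 + (a1 - b1) ^ 2 + (a2 - b2) ^ 2, ?_⟩
  rw [dist_sq_eq3, ha0, ha1, ha2, hb0, hb1, hb2]
  push_cast; ring

/-- There is no regular dodecahedron all of whose vertices have integer coordinates. -/
theorem no_integer_regular_dodecahedron :
    ¬ ∃ S : Set (EuclideanSpace ℝ (Fin 3)),
      IsRegularDodecahedron S ∧ ∀ v ∈ S, ∀ i : Fin 3, ∃ z : ℤ, v i = z := by
  rintro ⟨S, ⟨r, f, hr, hf, rfl⟩, hint⟩
  set P : EuclideanSpace ℝ (Fin 3) := (WithLp.equiv 2 (Fin 3 → ℝ)).symm ![1, 1, 1] with hP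
  set Q : EuclideanSpace ℝ (Fin 3) := (WithLp.equiv 2 (Fin 3 → ℝ)).symm ![(1:ℝ), 1, -1] with hQ
  set R : EuclideanSpace ℝ (Fin 3) :=
    (WithLp.equiv 2 (Fin 3 → ℝ)).symm ![0, 1 / goldenR, 1 * goldenR] with hR
  have hPmem : P ∈ stdDodecahedron := ⟨1, 1, 1, Or.inl rfl, Or.inl rfl, Or.inl rfl, Or.inl rfl⟩
  have hQmem : Q ∈ stdDodecahedron :=
    ⟨1, 1, -1, Or.inl rfl, Or.inl rfl, Or.inr rfl, Or.inl rfl⟩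
  have hRmem : R ∈ stdDodecahedron :=
    ⟨1, 1, 1, Or.inl rfl, Or.inl rfl, Or.inl rfl, Or.inr (Or.inl rfl)⟩
  have ha : Real.sqrt 5 ^ 2 = 5 := Real.sq_sqrt (by norm_num)
  have ha0 : (0:ℝ) ≤ Real.sqrt 5 := Real.sqrt_nonneg 5
  have hgne : goldenR ≠ 0 := by unfold goldenR; positivity
  have dPQ : dist P Q ^ 2 = 4 := by
    rw [dist_sq_eq3]
    simp [hP, hQ, WithLp.equiv_symm_apply, PiLp.toLp_apply]
    norm_num
  have dPR : dist P R ^ 2 = 6 - 2 * Real.sqrt 5 := by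
    rw [dist_sq_eq3]
    simp only [hP, hR, WithLp.equiv_symm_apply, PiLp.toLp_apply, Matrix.cons_val_zero, Matrix.cons_val_one,
      Matrix.head_cons, Matrix.cons_val_two, Matrix.tail_cons]
    rw [goldenR] at hgne ⊢
    field_simp
    ring_nf
    nlinarith [ha, ha0]
  obtain ⟨n, hn⟩ := int_dist_sq_s1 (f P) (f Q) (hint _ ⟨P, hPmem, rfl⟩) (hint _ ⟨Q, hQmem, rfl⟩)
  obtain ⟨m, hm⟩ := int_dist_sq_s1 (f P) (f R) (hint _ ⟨P, hPmem, rfl⟩) (hint _ ⟨R, hRmem, rfl⟩)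
  have h1 : (n : ℝ) = r ^ 2 * 4 := by
    rw [← hn, hf P hPmem Q hQmem, mul_pow, dPQ]
  have h2 : (m : ℝ) = r ^ 2 * (6 - 2 * Real.sqrt 5) := by
    rw [← hm, hf P hPmem R hRmem, mul_pow, dPR]
  have hnpos : (0:ℝ) < n := by rw [h1]; positivity
  have key : Real.sqrt 5 * n = 3 * n - 2 * m := by
    linear_combination Real.sqrt 5 * h1 - 3 * h1 + 2 * h2
  have hirr : Irrational (Real.sqrt 5) := (by norm_num : Nat.Prime 5).irrational_sqrt
  apply hirr
  refine ⟨((3 * n - 2 * m : ℤ) : ℚ) / (n : ℚ), ?_⟩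
  have hnne : ((n : ℚ) : ℝ) ≠ 0 := by push_cast; exact hnpos.ne'
  push_cast
  rw [div_eq_iff (by exact_mod_cast hnpos.ne')]
  linarith [key]
end

section
/- If a cube with vertices in ℤ³ is irreducible (it is not the image of another cube with vertices in ℤ³ under a translation by an integer vector combined with a dilation by an integer factor of absolute value greater than 1), then its side length is an odd natural number. -/
open Matrix

/-- `(v, u₁, u₂, u₃)` describes a cube in `ℤ³`: base vertex `v` and pairwise orthogonal
nonzero edge vectors of equal (squared) norm. -/
def IsCubeZ (v u₁ u₂ u₃ : Fin 3 → ℤ) : Prop :=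
  u₁ ⬝ᵥ u₂ = 0 ∧ u₁ ⬝ᵥ u₃ = 0 ∧ u₂ ⬝ᵥ u₃ = 0 ∧
  u₁ ⬝ᵥ u₁ = u₂ ⬝ᵥ u₂ ∧ u₂ ⬝ᵥ u₂ = u₃ ⬝ᵥ u₃ ∧ u₁ ≠ 0

/-- The eight vertices of the cube `(v, u₁, u₂, u₃)`. -/
def cubeVertsZ (v u₁ u₂ u₃ : Fin 3 → ℤ) : Set (Fin 3 → ℤ) :=
  {p | ∃ ε : Fin 3 → Bool, p = v + (if ε 0 then u₁ else 0) + (if ε 1 then u₂ else 0) +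
    (if ε 2 then u₃ else 0)}

lemma zmod4_aux : ∀ x y z : ZMod 4, x*x + y*y + z*z = 0 →
    2*x = 0 ∧ 2*y = 0 ∧ 2*z = 0 := by decide

lemma even_of_sq_sum (a b c : ℤ) (h : (4:ℤ) ∣ a*a + b*b + c*c) :
    (2:ℤ) ∣ a ∧ (2:ℤ) ∣ b ∧ (2:ℤ) ∣ c := by
  have h4 : ((a*a + b*b + c*c : ℤ) : ZMod 4) = 0 :=
    (ZMod.intCast_zmod_eq_zero_iff_dvd _ 4).mpr h
  push_cast at h4
  obtain ⟨ha, hb, hc⟩ := zmod4_aux a b c h4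
  have ha' : (4:ℤ) ∣ 2*a := (ZMod.intCast_zmod_eq_zero_iff_dvd _ 4).mp (by push_cast; exact ha)
  have hb' : (4:ℤ) ∣ 2*b := (ZMod.intCast_zmod_eq_zero_iff_dvd _ 4).mp (by push_cast; exact hb)
  have hc' : (4:ℤ) ∣ 2*c := (ZMod.intCast_zmod_eq_zero_iff_dvd _ 4).mp (by push_cast; exact hc)
  omega

lemma half_vec (u : Fin 3 → ℤ) (h : (4:ℤ) ∣ u ⬝ᵥ u) :
    ∃ w : Fin 3 → ℤ, u = (2:ℤ) • w := by
  have h' : (4:ℤ) ∣ u 0 * u 0 + u 1 * u 1 + u 2 * u 2 := by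
    simpa [dotProduct, Fin.sum_univ_three] using h
  obtain ⟨h0, h1, h2⟩ := even_of_sq_sum _ _ _ h'
  refine ⟨fun j => u j / 2, funext fun j => ?_⟩
  fin_cases j <;> simp <;> omega

/-- An irreducible cube in `ℤ³` (one which is not obtained from another integer cube by a
dilation by an integer factor of absolute value `> 1` followed by an integer translation)
has odd side length. -/
theorem irreducible_cube_side_odd (v u₁ u₂ u₃ : Fin 3 → ℤ)
    (hcube : IsCubeZ v u₁ u₂ u₃)
    (hirr : ¬ ∃ (w w₁ w₂ w₃ : Fin 3 → ℤ) (k : ℤ) (t : Fin 3 → ℤ),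
      IsCubeZ w w₁ w₂ w₃ ∧ 1 < |k| ∧
      cubeVertsZ v u₁ u₂ u₃ = (fun p => k • p + t) '' cubeVertsZ w w₁ w₂ w₃)
    (n : ℕ) (hn : u₁ ⬝ᵥ u₁ = (n : ℤ) ^ 2) :
    Odd n := by
  by_contra hodd
  rw [Nat.not_odd_iff_even] at hodd
  obtain ⟨m, hm⟩ := hodd
  obtain ⟨h12, h13, h23, h11, h22, hne⟩ := hcube
  have hdvd : (4:ℤ) ∣ u₁ ⬝ᵥ u₁ := ⟨(m:ℤ)^2, by rw [hn, hm]; push_cast; ring⟩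
  obtain ⟨w₁, hw1⟩ := half_vec u₁ hdvd
  obtain ⟨w₂, hw2⟩ := half_vec u₂ (by rw [← h11]; exact hdvd)
  obtain ⟨w₃, hw3⟩ := half_vec u₃ (by rw [← h22, ← h11]; exact hdvd)
  apply hirr
  refine ⟨0, w₁, w₂, w₃, 2, v, ⟨?_, ?_, ?_, ?_, ?_, ?_⟩, by norm_num, ?_⟩
  · rw [hw1, hw2] at h12
    simp only [dotProduct, Fin.sum_univ_three, Pi.smul_apply, smul_eq_mul] at h12 ⊢; linarith
  · rw [hw1, hw3] at h13
    simp only [dotProduct, Fin.sum_univ_three, Pi.smul_apply, smul_eq_mul] at h13 ⊢; linarith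
  · rw [hw2, hw3] at h23
    simp only [dotProduct, Fin.sum_univ_three, Pi.smul_apply, smul_eq_mul] at h23 ⊢; linarith
  · rw [hw1, hw2] at h11
    simp only [dotProduct, Fin.sum_univ_three, Pi.smul_apply, smul_eq_mul] at h11 ⊢; linarith
  · rw [hw2, hw3] at h22
    simp only [dotProduct, Fin.sum_univ_three, Pi.smul_apply, smul_eq_mul] at h22 ⊢; linarith
  · rintro rfl
    exact hne (by rw [hw1]; simp)
  · ext p
    simp only [cubeVertsZ, Set.mem_setOf_eq, Set.mem_image]
    constructor
    · rintro ⟨ε, rfl⟩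
      refine ⟨0 + (if ε 0 then w₁ else 0) + (if ε 1 then w₂ else 0) +
        (if ε 2 then w₃ else 0), ⟨ε, rfl⟩, ?_⟩
      rw [hw1, hw2, hw3]
      simp only [smul_add, smul_zero, smul_ite]
      abel
    · rintro ⟨q, ⟨ε, rfl⟩, rfl⟩
      refine ⟨ε, ?_⟩
      rw [hw1, hw2, hw3]
      simp only [smul_add, smul_zero, smul_ite]
      abel
end
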